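/- Let X be an integer-valued random variable with a discrete log-concave distribution with probability function f, and let m ∈ ℤ be a mode of X, i.e., a point where f attains its maximum M(X) = f(m). Then M(X)^2 · E(X - m)^2 ≤ 6; in particular, M(X)^2 · Var(X) ≤ 6. (Proposition 6.2.) -/

import Mathlib

open MeasureTheory ProbabilityTheory Real

/-- The probability mass function of an integer-valued random variable `X`
on a probability space `(Ω, μ)`: `f(k) = P{X = k}`. -/
noncomputable def pmfOf {Ω : Type*} [MeasurableSpace Ω] (μ : Measure Ω) (X : Ω → ℤ)
    (k : ℤ) : ℝ :=
  (μ (X ⁻¹' {k})).toReal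

/-- A probability function `f : ℤ → ℝ` is discrete log-concave: it is non-negative,
its support is an integer interval, and `f(k)^2 ≥ f(k-1)·f(k+1)` for all `k`. -/
def IsDiscreteLogConcavePMF (f : ℤ → ℝ) : Prop :=
  (∀ k : ℤ, 0 ≤ f k) ∧
  (∀ k l m : ℤ, k ≤ l → l ≤ m → 0 < f k → 0 < f m → 0 < f l) ∧
  (∀ k : ℤ, f (k - 1) * f (k + 1) ≤ f k ^ 2)

/-- `M(X) = sup_{k ∈ ℤ} P{X = k}`. -/
noncomputable def maxProb {Ω : Type*} [MeasurableSpace Ω] (μ : Measure Ω) (X : Ω → ℤ) : ℝ :=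
  ⨆ k : ℤ, pmfOf μ X k

namespace DLCAux

open Finset

/-- Triangular triple-sum identity. -/
lemma triple_sum_id (p : ℕ → ℝ) (n : ℕ) :
    ∑ a ∈ range n, ∑ b ∈ range (n - a), ∑ c ∈ range (n - a - b), p (a + b + c)
      = ∑ j ∈ range n, ((∑ a ∈ range (j + 1), (j + 1 - a) : ℕ) : ℝ) * p j := by
  have h1 : ∀ a b : ℕ, ∑ c ∈ range (n - a - b), p (a + b + c) = ∑ j ∈ Finset.Ico (a + b) n, p j := by
    intro a b
    rw [Finset.sum_Ico_eq_sum_range, Nat.sub_sub]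
  have h2 : ∀ a : ℕ, ∑ b ∈ range (n - a), ∑ j ∈ Finset.Ico (a + b) n, p j
      = ∑ i ∈ Finset.Ico a n, ∑ j ∈ Finset.Ico i n, p j := by
    intro a
    rw [Finset.sum_Ico_eq_sum_range]
  calc ∑ a ∈ range n, ∑ b ∈ range (n - a), ∑ c ∈ range (n - a - b), p (a + b + c)
      = ∑ a ∈ range n, ∑ i ∈ Finset.Ico a n, ∑ j ∈ Finset.Ico i n, p j := by
        refine Finset.sum_congr rfl fun a _ => ?_
        rw [← h2 a]
        exact Finset.sum_congr rfl fun b _ => h1 a b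
    _ = ∑ a ∈ range n, ∑ j ∈ Finset.Ico a n, ((j + 1 - a : ℕ) : ℝ) * p j := by
        refine Finset.sum_congr rfl fun a _ => ?_
        rw [Finset.sum_Ico_Ico_comm]
        refine Finset.sum_congr rfl fun j _ => ?_
        rw [Finset.sum_const, Nat.card_Ico, nsmul_eq_mul]
    _ = ∑ a ∈ Finset.Ico 0 n, ∑ j ∈ Finset.Ico a n, ((j + 1 - a : ℕ) : ℝ) * p j := by
        rw [Finset.range_eq_Ico]
    _ = ∑ j ∈ Finset.Ico 0 n, ∑ a ∈ Finset.Ico 0 (j + 1), ((j + 1 - a : ℕ) : ℝ) * p j := by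
        rw [Finset.sum_Ico_Ico_comm]
    _ = ∑ j ∈ range n, ((∑ a ∈ range (j + 1), (j + 1 - a) : ℕ) : ℝ) * p j := by
        rw [← Finset.range_eq_Ico]
        refine Finset.sum_congr rfl fun j _ => ?_
        rw [Nat.cast_sum, Finset.sum_mul, Finset.range_eq_Ico]

lemma weight_lb (j : ℕ) : (j : ℝ)^2 ≤ 2 * ((∑ a ∈ range (j + 1), (j + 1 - a) : ℕ) : ℝ) := by
  have h : (∑ a ∈ range (j + 1), (j + 1 - a)) = ∑ a ∈ range (j + 1), (a + 1) := by
    have := Finset.sum_range_reflect (fun i => i + 1) (j + 1)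
    rw [← this]
    refine Finset.sum_congr rfl fun a ha => ?_
    have := Finset.mem_range.mp ha
    omega
  have h2 : (∑ a ∈ range (j + 1), (a + 1)) * 2 = (j + 1) * (j + 2) := by
    have e : (∑ a ∈ range (j + 1), (a + 1)) = ∑ i ∈ range (j + 2), i := by
      rw [Finset.sum_range_succ' (fun i => i) (j + 1)]
      simp
    rw [e, Finset.sum_range_id_mul_two, Nat.succ_sub_one]
    ring
  have h3 : j ^ 2 * 2 ≤ (∑ a ∈ range (j + 1), (j + 1 - a)) * 2 * 2 := by
    rw [h, h2]; nlinarith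
  have := (Nat.cast_le (α := ℝ)).mpr h3
  push_cast at this ⊢
  nlinarith

/-- One-sided core bound for log-concave sequences. -/
lemma core_bound (p : ℕ → ℝ) (h0 : ∀ j, 0 ≤ p j)
    (key : ∀ a b : ℕ, p 0 * p (a + b) ≤ p a * p b)
    (mass : ∀ k : ℕ, ∑ j ∈ range k, p j ≤ 1) (n : ℕ) :
    (p 0)^2 * ∑ j ∈ range n, (j : ℝ)^2 * p j ≤ 2 := by
  set S := ∑ j ∈ range n, p j with hSdef
  have hS0 : 0 ≤ S := Finset.sum_nonneg fun j _ => h0 j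
  have hS1 : S ≤ 1 := mass n
  have key2 : ∀ a b c : ℕ, (p 0)^2 * p (a + b + c) ≤ p a * p b * p c := by
    intro a b c
    have k1 := key (a + b) c
    have k2 := key a b
    nlinarith [h0 (a+b), h0 c, h0 0, h0 a, h0 b, h0 (a+b+c)]
  have hpart : ∀ k : ℕ, k ≤ n → ∑ j ∈ range k, p j ≤ S := by
    intro k hk
    exact Finset.sum_le_sum_of_subset_of_nonneg (Finset.range_subset_range.mpr hk)
      (fun j _ _ => h0 j)
  have step1 : (p 0)^2 * ∑ j ∈ range n, ((∑ a ∈ range (j + 1), (j + 1 - a) : ℕ) : ℝ) * p j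
      ≤ S^3 := by
    rw [← triple_sum_id, Finset.mul_sum]
    calc ∑ a ∈ range n, (p 0)^2 * ∑ b ∈ range (n - a), ∑ c ∈ range (n - a - b), p (a + b + c)
        ≤ ∑ a ∈ range n, p a * (S * S) := by
          refine Finset.sum_le_sum fun a _ => ?_
          rw [Finset.mul_sum]
          calc ∑ b ∈ range (n - a), (p 0)^2 * ∑ c ∈ range (n - a - b), p (a + b + c)
              ≤ ∑ b ∈ range (n - a), p a * p b * S := by
                refine Finset.sum_le_sum fun b _ => ?_
                rw [Finset.mul_sum]
                calc ∑ c ∈ range (n - a - b), (p 0)^2 * p (a + b + c)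
                    ≤ ∑ c ∈ range (n - a - b), p a * p b * p c :=
                      Finset.sum_le_sum fun c _ => key2 a b c
                  _ = p a * p b * ∑ c ∈ range (n - a - b), p c := by rw [Finset.mul_sum]
                  _ ≤ p a * p b * S := by
                      refine mul_le_mul_of_nonneg_left ?_ (mul_nonneg (h0 a) (h0 b))
                      exact hpart _ (Nat.sub_le_of_le_add (by omega))
            _ = (∑ b ∈ range (n - a), p a * p b) * S := by rw [Finset.sum_mul]
            _ = p a * (∑ b ∈ range (n - a), p b) * S := by rw [← Finset.mul_sum]
            _ ≤ p a * (S * S) := by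
                have hb : ∑ b ∈ range (n - a), p b ≤ S := hpart _ (Nat.sub_le n a)
                have := mul_le_mul_of_nonneg_left hb (h0 a)
                nlinarith [mul_nonneg (h0 a) (Finset.sum_nonneg (fun b (_ : b ∈ range (n-a)) => h0 b))]
      _ = S * (S * S) := by rw [← Finset.sum_mul]
      _ = S^3 := by ring
  have step2 : ∑ j ∈ range n, (j : ℝ)^2 * p j
      ≤ 2 * ∑ j ∈ range n, ((∑ a ∈ range (j + 1), (j + 1 - a) : ℕ) : ℝ) * p j := by
    rw [Finset.mul_sum]
    refine Finset.sum_le_sum fun j _ => ?_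
    rw [← mul_assoc]
    exact mul_le_mul_of_nonneg_right (weight_lb j) (h0 j)
  have h00 : 0 ≤ (p 0)^2 := sq_nonneg _
  have hS3 : S^3 ≤ 1 := pow_le_one₀ hS0 hS1
  nlinarith [mul_le_mul_of_nonneg_left step2 h00]

section LC
variable (f : ℤ → ℝ)

lemma lc_ratio (h0 : ∀ k, 0 ≤ f k) (hlc3 : ∀ k : ℤ, f (k - 1) * f (k + 1) ≤ f k ^ 2) :
    ∀ (n : ℕ) (k : ℤ), (∀ t, k ≤ t → t ≤ k + n → 0 < f t) →
    f (k + n + 1) * f k ≤ f (k + n) * f (k + 1) := by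
  intro n
  induction n with
  | zero => intro k _; push_cast; rw [add_zero, mul_comm]
  | succ n IH =>
    intro k hpos
    have hIH := IH k (fun t h1 h2 => hpos t h1 (by omega))
    have hl : 0 < f (k + n) := hpos (k + n) (by omega) (by push_cast; omega)
    have hl1 : 0 < f (k + n + 1) := hpos (k + n + 1) (by omega) (by push_cast; omega)
    have hlc := hlc3 (k + n + 1)
    have e1 : k + (n : ℤ) + 1 - 1 = k + n := by ring
    have e2 : k + (n : ℤ) + 1 + 1 = k + n + 2 := by ring
    rw [e1, e2] at hlc
    have e3 : k + ((n : ℕ) + 1 : ℕ) + 1 = k + (n : ℤ) + 2 := by push_cast; ring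
    have e4 : k + ((n : ℕ) + 1 : ℕ) = k + (n : ℤ) + 1 := by push_cast; ring
    rw [e3, e4]
    nlinarith [h0 k, h0 (k + 1), mul_le_mul_of_nonneg_right hlc (h0 k),
      mul_le_mul_of_nonneg_left hIH hl1.le]

lemma lc_mode_key (h0 : ∀ k, 0 ≤ f k)
    (hiv : ∀ k l m : ℤ, k ≤ l → l ≤ m → 0 < f k → 0 < f m → 0 < f l)
    (hlc3 : ∀ k : ℤ, f (k - 1) * f (k + 1) ≤ f k ^ 2)
    (m : ℤ) (hm : ∀ k, f k ≤ f m) (a : ℕ) :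
    ∀ b : ℕ, f m * f (m + a + b) ≤ f (m + a) * f (m + b) := by
  intro b
  induction b with
  | zero => push_cast; rw [add_zero, add_zero, mul_comm]
  | succ b IH =>
    have e1 : m + (a : ℤ) + ((b : ℕ) + 1 : ℕ) = m + a + b + 1 := by push_cast; ring
    have e2 : m + ((b : ℕ) + 1 : ℕ) = m + b + 1 := by push_cast; ring
    rw [e1, e2]
    rcases le_or_gt (f (m + a + b + 1)) 0 with hle | hpos
    · have hz : f (m + (a : ℤ) + b + 1) = 0 := le_antisymm hle (h0 _)
      rw [hz, mul_zero]
      exact mul_nonneg (h0 _) (h0 _)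
    · have hfm : 0 < f m := lt_of_lt_of_le hpos (hm _)
      have hposall : ∀ t, m ≤ t → t ≤ m + a + b + 1 → 0 < f t :=
        fun t h1 h2 => hiv m t (m + a + b + 1) h1 h2 hfm hpos
      have ratio := lc_ratio f h0 hlc3 a (m + b)
        (fun t h1 h2 => hposall t (by omega) (by omega))
      have e3 : m + (b : ℤ) + a = m + a + b := by ring
      rw [e3] at ratio
      have hfb : 0 < f (m + b) := hposall _ (by omega) (by omega)
      have hA := mul_le_mul_of_nonneg_left ratio hfm.le
      have hB := mul_le_mul_of_nonneg_right IH (h0 (m + b + 1))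
      nlinarith [h0 (m + a), h0 (m + a + b + 1)]

lemma lc_mode_key_neg (h0 : ∀ k, 0 ≤ f k)
    (hiv : ∀ k l m : ℤ, k ≤ l → l ≤ m → 0 < f k → 0 < f m → 0 < f l)
    (hlc3 : ∀ k : ℤ, f (k - 1) * f (k + 1) ≤ f k ^ 2)
    (m : ℤ) (hm : ∀ k, f k ≤ f m) (a b : ℕ) :
    f m * f (m - a - b) ≤ f (m - a) * f (m - b) := by
  set g : ℤ → ℝ := fun k => f (2 * m - k) with hg
  have hg0 : ∀ k, 0 ≤ g k := fun k => h0 _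
  have hgiv : ∀ k l r : ℤ, k ≤ l → l ≤ r → 0 < g k → 0 < g r → 0 < g l := by
    intro k l r hkl hlr pk pr
    exact hiv (2 * m - r) (2 * m - l) (2 * m - k) (by omega) (by omega) pr pk
  have hglc : ∀ k : ℤ, g (k - 1) * g (k + 1) ≤ g k ^ 2 := by
    intro k
    have := hlc3 (2 * m - k)
    have e1 : (2 * m - k) - 1 = 2 * m - (k + 1) := by ring
    have e2 : (2 * m - k) + 1 = 2 * m - (k - 1) := by ring
    rw [e1, e2] at this
    simp only [hg]
    nlinarith [this]
  have hgm : ∀ k, g k ≤ g m := by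
    intro k
    simp only [hg]
    have e : 2 * m - m = m := by ring
    rw [e]
    exact hm _
  have := lc_mode_key g hg0 hgiv hglc m hgm a b
  simp only [hg] at this
  have e0 : 2 * m - m = m := by ring
  have e1 : 2 * m - (m + a + b) = m - a - b := by ring
  have e2 : 2 * m - (m + a) = m - a := by ring
  have e3 : 2 * m - (m + b) = m - b := by ring
  rw [e0, e1, e2, e3] at this
  exact this

end LC

end DLCAux

/-- Proposition 6.2: if `X` is an integer-valued random variable with a discrete
log-concave distribution whose probability function attains its maximum `M(X)` at
a mode `m ∈ ℤ`, then `M(X)^2·E(X - m)^2 ≤ 6`; in particular `M(X)^2·Var(X) ≤ 6`. -/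
theorem discrete_logConcave_mode_second_moment
    {Ω : Type*} [MeasurableSpace Ω] (μ : Measure Ω) [IsProbabilityMeasure μ]
    (X : Ω → ℤ) (hX : Measurable X)
    (hlc : IsDiscreteLogConcavePMF (pmfOf μ X))
    (m : ℤ) (hm : ∀ k : ℤ, pmfOf μ X k ≤ pmfOf μ X m) :
    ENNReal.ofReal (pmfOf μ X m ^ 2) *
        ∫⁻ ω, ENNReal.ofReal (((X ω : ℝ) - (m : ℝ)) ^ 2) ∂μ ≤ 6 ∧
      ENNReal.ofReal (pmfOf μ X m ^ 2) * evariance (fun ω => (X ω : ℝ)) μ ≤ 6 := by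
  classical
  obtain ⟨h0, hiv, hlc3⟩ := hlc
  set f : ℤ → ℝ := pmfOf μ X with hf
  have hne : ∀ k : ℤ, μ (X ⁻¹' {k}) ≠ ⊤ := fun k => measure_ne_top μ _
  -- finite sums of the pmf are at most 1
  have sum_le : ∀ s : Finset ℤ, ∑ k ∈ s, f k ≤ 1 := by
    intro s
    have hdisj : (↑s : Set ℤ).PairwiseDisjoint (fun k => X ⁻¹' {k}) := by
      intro i _ j _ hij
      simp only [Function.onFun]
      refine Set.disjoint_left.mpr fun ω hi hj => ?_
      apply hij
      simp only [Set.mem_preimage, Set.mem_singleton_iff] at hi hj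
      omega
    have hmeas : ∀ k ∈ s, MeasurableSet (X ⁻¹' {k}) := fun k _ => hX (measurableSet_singleton k)
    calc ∑ k ∈ s, f k = (∑ k ∈ s, μ (X ⁻¹' {k})).toReal :=
          (ENNReal.toReal_sum (fun k _ => hne k)).symm
      _ = (μ (⋃ k ∈ s, X ⁻¹' {k})).toReal := by rw [measure_biUnion_finset hdisj hmeas]
      _ ≤ (1 : ENNReal).toReal := ENNReal.toReal_mono ENNReal.one_ne_top prob_le_one
      _ = 1 := ENNReal.toReal_one
  -- one-sided sequences
  set p : ℕ → ℝ := fun j => f (m + (j : ℤ)) with hp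
  set q : ℕ → ℝ := fun j => f (m - (j : ℤ)) with hq
  have hp0 : ∀ j, 0 ≤ p j := fun j => h0 _
  have hq0 : ∀ j, 0 ≤ q j := fun j => h0 _
  have hpkey : ∀ a b : ℕ, p 0 * p (a + b) ≤ p a * p b := by
    intro a b
    have h := DLCAux.lc_mode_key f h0 hiv hlc3 m hm a b
    simp only [hp]
    rw [show (m + ((0 : ℕ) : ℤ)) = m by simp,
      show (m + ((a + b : ℕ) : ℤ)) = m + a + b by push_cast; ring]
    exact h
  have hqkey : ∀ a b : ℕ, q 0 * q (a + b) ≤ q a * q b := by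
    intro a b
    have h := DLCAux.lc_mode_key_neg f h0 hiv hlc3 m hm a b
    simp only [hq]
    rw [show (m - ((0 : ℕ) : ℤ)) = m by simp,
      show (m - ((a + b : ℕ) : ℤ)) = m - a - b by push_cast; ring]
    exact h
  have hpmass : ∀ n : ℕ, ∑ j ∈ Finset.range n, p j ≤ 1 := by
    intro n
    have hinj : ∀ x ∈ Finset.range n, ∀ y ∈ Finset.range n,
        (fun j : ℕ => m + (j : ℤ)) x = (fun j : ℕ => m + (j : ℤ)) y → x = y := by
      intro x _ y _ hxy; simp at hxy; omega
    simp only [hp]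
    rw [← Finset.sum_image (f := f) hinj]
    exact sum_le _
  have hqmass : ∀ n : ℕ, ∑ j ∈ Finset.range n, q j ≤ 1 := by
    intro n
    have hinj : ∀ x ∈ Finset.range n, ∀ y ∈ Finset.range n,
        (fun j : ℕ => m - (j : ℤ)) x = (fun j : ℕ => m - (j : ℤ)) y → x = y := by
      intro x _ y _ hxy; simp at hxy; omega
    simp only [hq]
    rw [← Finset.sum_image (f := f) hinj]
    exact sum_le _
  have hp0eq : p 0 = f m := by simp [hp]
  have hq0eq : q 0 = f m := by simp [hq]
  have hcorep : ∀ n : ℕ, f m ^ 2 * ∑ j ∈ Finset.range n, (j : ℝ)^2 * p j ≤ 2 := by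
    intro n
    have := DLCAux.core_bound p hp0 hpkey hpmass n
    rwa [hp0eq] at this
  have hcoreq : ∀ n : ℕ, f m ^ 2 * ∑ j ∈ Finset.range n, (j : ℝ)^2 * q j ≤ 2 := by
    intro n
    have := DLCAux.core_bound q hq0 hqkey hqmass n
    rwa [hq0eq] at this
  -- finite bound over any finite set of integers
  have hterm0 : ∀ k : ℤ, 0 ≤ f m ^ 2 * (((k : ℝ) - (m : ℝ))^2 * f k) :=
    fun k => mul_nonneg (sq_nonneg _) (mul_nonneg (sq_nonneg _) (h0 k))
  have hfin : ∀ s : Finset ℤ, ∑ k ∈ s, f m ^ 2 * (((k : ℝ) - (m : ℝ))^2 * f k) ≤ 6 := by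
    intro s
    set n : ℕ := 1 + s.sup (fun k => (k - m).natAbs) with hn
    set A : Finset ℤ := (Finset.range n).image (fun j : ℕ => m + (j : ℤ)) with hA
    set B : Finset ℤ := (Finset.range n).image (fun j : ℕ => m - (j : ℤ)) with hB
    have hsub : s ⊆ A ∪ B := by
      intro k hk
      have hle : (k - m).natAbs ≤ s.sup (fun k => (k - m).natAbs) :=
        Finset.le_sup (f := fun k => (k - m).natAbs) hk
      rcases le_or_gt m k with h | h
      · refine Finset.mem_union_left _ (Finset.mem_image.mpr ⟨(k - m).natAbs,
          Finset.mem_range.mpr (by omega), by omega⟩)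
      · refine Finset.mem_union_right _ (Finset.mem_image.mpr ⟨(k - m).natAbs,
          Finset.mem_range.mpr (by omega), by omega⟩)
    have hsumA : ∑ k ∈ A, f m ^ 2 * (((k : ℝ) - (m : ℝ))^2 * f k) ≤ 2 := by
      have hinj : ∀ x ∈ Finset.range n, ∀ y ∈ Finset.range n,
          (fun j : ℕ => m + (j : ℤ)) x = (fun j : ℕ => m + (j : ℤ)) y → x = y := by
        intro x _ y _ hxy; simp at hxy; omega
      rw [hA, Finset.sum_image hinj]
      calc ∑ j ∈ Finset.range n, f m ^ 2 * ((((m + (j : ℤ) : ℤ) : ℝ) - (m : ℝ))^2 * f (m + (j : ℤ)))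
          = f m ^ 2 * ∑ j ∈ Finset.range n, (j : ℝ)^2 * p j := by
            rw [Finset.mul_sum]
            refine Finset.sum_congr rfl fun j _ => ?_
            have e : (((m + (j : ℤ) : ℤ) : ℝ) - (m : ℝ))^2 = (j : ℝ)^2 := by push_cast; ring
            rw [e]
        _ ≤ 2 := hcorep n
    have hsumB : ∑ k ∈ B, f m ^ 2 * (((k : ℝ) - (m : ℝ))^2 * f k) ≤ 2 := by
      have hinj : ∀ x ∈ Finset.range n, ∀ y ∈ Finset.range n,
          (fun j : ℕ => m - (j : ℤ)) x = (fun j : ℕ => m - (j : ℤ)) y → x = y := by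
        intro x _ y _ hxy; simp at hxy; omega
      rw [hB, Finset.sum_image hinj]
      calc ∑ j ∈ Finset.range n, f m ^ 2 * ((((m - (j : ℤ) : ℤ) : ℝ) - (m : ℝ))^2 * f (m - (j : ℤ)))
          = f m ^ 2 * ∑ j ∈ Finset.range n, (j : ℝ)^2 * q j := by
            rw [Finset.mul_sum]
            refine Finset.sum_congr rfl fun j _ => ?_
            have e : (((m - (j : ℤ) : ℤ) : ℝ) - (m : ℝ))^2 = (j : ℝ)^2 := by push_cast; ring
            rw [e]
        _ ≤ 2 := hcoreq n
    have hAB : ∑ k ∈ A ∪ B, f m ^ 2 * (((k : ℝ) - (m : ℝ))^2 * f k)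
        ≤ ∑ k ∈ A, f m ^ 2 * (((k : ℝ) - (m : ℝ))^2 * f k)
          + ∑ k ∈ B, f m ^ 2 * (((k : ℝ) - (m : ℝ))^2 * f k) := by
      have := Finset.sum_union_inter (s₁ := A) (s₂ := B)
        (f := fun k : ℤ => f m ^ 2 * (((k : ℝ) - (m : ℝ))^2 * f k))
      have hint : 0 ≤ ∑ k ∈ A ∩ B, f m ^ 2 * (((k : ℝ) - (m : ℝ))^2 * f k) :=
        Finset.sum_nonneg fun k _ => hterm0 k
      linarith
    calc ∑ k ∈ s, f m ^ 2 * (((k : ℝ) - (m : ℝ))^2 * f k)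
        ≤ ∑ k ∈ A ∪ B, f m ^ 2 * (((k : ℝ) - (m : ℝ))^2 * f k) :=
          Finset.sum_le_sum_of_subset_of_nonneg hsub (fun k _ _ => hterm0 k)
      _ ≤ 2 + 2 := by linarith
      _ ≤ 6 := by norm_num
  -- lintegral as a tsum
  have hlint : ∫⁻ ω, ENNReal.ofReal (((X ω : ℝ) - (m : ℝ))^2) ∂μ
      = ∑' (k : ℤ), ENNReal.ofReal (((k : ℝ) - (m : ℝ))^2) * μ (X ⁻¹' {k}) := by
    have hg : Measurable (fun k : ℤ => ENNReal.ofReal (((k : ℝ) - (m : ℝ))^2)) :=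
      measurable_from_top
    rw [← lintegral_map hg hX, lintegral_countable']
    congr 1
    funext k
    rw [Measure.map_apply hX (measurableSet_singleton k)]
  have part1 : ENNReal.ofReal (f m ^ 2) *
      ∫⁻ ω, ENNReal.ofReal (((X ω : ℝ) - (m : ℝ))^2) ∂μ ≤ 6 := by
    rw [hlint]
    calc ENNReal.ofReal (f m ^ 2) * ∑' (k : ℤ), ENNReal.ofReal (((k : ℝ) - (m : ℝ))^2) * μ (X ⁻¹' {k})
        = ∑' (k : ℤ), ENNReal.ofReal (f m ^ 2 * (((k : ℝ) - (m : ℝ))^2 * f k)) := by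
          rw [← ENNReal.tsum_mul_left]
          congr 1
          funext k
          rw [← ENNReal.ofReal_toReal (hne k)]
          rw [← ENNReal.ofReal_mul (sq_nonneg _), ← ENNReal.ofReal_mul (sq_nonneg _)]
          rfl
      _ ≤ 6 := by
          rw [ENNReal.tsum_eq_iSup_sum]
          refine iSup_le fun s => ?_
          rw [← ENNReal.ofReal_sum_of_nonneg (fun k _ => hterm0 k)]
          calc ENNReal.ofReal (∑ k ∈ s, f m ^ 2 * (((k : ℝ) - (m : ℝ))^2 * f k))
              ≤ ENNReal.ofReal 6 := ENNReal.ofReal_le_ofReal (hfin s)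
            _ = 6 := by norm_num
  refine ⟨part1, ?_⟩
  -- part 2: variance bound
  have hM : 0 < f m := by
    by_contra hc
    push_neg at hc
    have hall : ∀ k : ℤ, μ (X ⁻¹' {k}) = 0 := by
      intro k
      have h1 : f k = 0 := le_antisymm (le_trans (hm k) hc) (h0 k)
      rcases (ENNReal.toReal_eq_zero_iff _).mp h1 with h | h
      · exact h
      · exact absurd h (hne k)
    have huniv : (Set.univ : Set Ω) = ⋃ k : ℤ, X ⁻¹' {k} := by
      ext ω; simp
    have h2 : μ Set.univ = 0 := by
      rw [huniv]
      exact measure_iUnion_null hall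
    rw [measure_univ] at h2
    exact one_ne_zero h2
  have hMne : ENNReal.ofReal (f m ^ 2) ≠ 0 := by
    rw [Ne, ENNReal.ofReal_eq_zero, not_le]
    positivity
  have hLne : (∫⁻ ω, ENNReal.ofReal (((X ω : ℝ) - (m : ℝ))^2) ∂μ) ≠ ⊤ := by
    intro hL
    rw [hL, ENNReal.mul_top hMne] at part1
    exact absurd part1 (by norm_num)
  set Z : Ω → ℝ := fun ω => (X ω : ℝ) - (m : ℝ) with hZ
  have hYm : Measurable (fun ω => (X ω : ℝ)) := measurable_from_top.comp hX
  have hZm : Measurable Z := hYm.sub measurable_const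
  have hZsq_int : Integrable (fun ω => Z ω ^ 2) μ := by
    refine ⟨(hZm.pow_const 2).aestronglyMeasurable, ?_⟩
    rw [hasFiniteIntegral_iff_ofReal (Filter.Eventually.of_forall fun ω => sq_nonneg _)]
    exact lt_of_le_of_ne le_top hLne
  have hZ2 : MemLp Z 2 μ := (memLp_two_iff_integrable_sq hZm.aestronglyMeasurable).mpr hZsq_int
  have hZint : Integrable Z μ := hZ2.integrable one_le_two
  have hev : evariance (fun ω => (X ω : ℝ)) μ = evariance Z μ := by
    rw [evariance_eq_lintegral_ofReal, evariance_eq_lintegral_ofReal]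
    have hYeq : (fun ω => (X ω : ℝ)) = fun ω => Z ω + (m : ℝ) := by
      funext ω; simp [hZ]
    have hI : ∫ x, (X x : ℝ) ∂μ = (∫ x, Z x ∂μ) + (m : ℝ) := by
      rw [hYeq, integral_add hZint (integrable_const _), integral_const]
      simp
    refine lintegral_congr fun ω => ?_
    rw [hI]
    congr 1
    have : (X ω : ℝ) = Z ω + (m : ℝ) := by simp [hZ]
    rw [this]
    ring
  have hev2 : evariance Z μ ≤ ∫⁻ ω, ENNReal.ofReal (((X ω : ℝ) - (m : ℝ))^2) ∂μ := by
    rw [← hZ2.ofReal_variance_eq]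
    calc ENNReal.ofReal (variance Z μ)
        ≤ ENNReal.ofReal (∫ x, (Z ^ 2) x ∂μ) :=
          ENNReal.ofReal_le_ofReal (variance_le_expectation_sq hZm.aestronglyMeasurable)
      _ = ∫⁻ ω, ENNReal.ofReal ((Z ω)^2) ∂μ := by
          refine ofReal_integral_eq_lintegral_ofReal ?_ ?_
          · exact hZsq_int.congr (Filter.Eventually.of_forall fun ω => rfl)
          · exact Filter.Eventually.of_forall fun ω => sq_nonneg _
      _ = ∫⁻ ω, ENNReal.ofReal (((X ω : ℝ) - (m : ℝ))^2) ∂μ := rfl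
  calc ENNReal.ofReal (f m ^ 2) * evariance (fun ω => (X ω : ℝ)) μ
      = ENNReal.ofReal (f m ^ 2) * evariance Z μ := by rw [hev]
    _ ≤ ENNReal.ofReal (f m ^ 2) * ∫⁻ ω, ENNReal.ofReal (((X ω : ℝ) - (m : ℝ))^2) ∂μ :=
        by gcongr
    _ ≤ 6 := part1
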